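/- The operator ω_{N;0} = tr_0[Ω_{N;0}] on h_q = ⊗_{a=1}^{2N}ℂ² has rank 1 and equals ω_{N;0} = v·wᵗ, where v = Σ_{i∈{1,2}^N} e^{(h/2T)·ε_{i_N}} · ⊗_{s=1}^{N}(e_{i_{s−1}} ⊗ e_{i_s}) (the vector e_{i_{s−1}} placed in tensor slot 2s−1 and e_{i_s} in slot 2s, with the periodic convention i_0 ≡ i_N and ε_i = (−1)^{i−1}) and w = Σ_{j∈{1,2}^N} ⊗_{s=1}^{N}(e_{j_s} ⊗ e_{j_s}). Furthermore (w,v) = 2·cosh(h/(2T)), ‖v‖² = 2^N·cosh(h/T) and ‖w‖² = 2^N. -/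

import Mathlib

noncomputable section
open Complex Filter Topology
open scoped Classical

namespace XXZ

/-- The open horizontal strip `S_a` of half-width `a` around the real axis. -/
def strip (a : ℝ) : Set ℂ := {z : ℂ | |z.im| < a}

/-- `ζ_m = min(ζ, π - ζ)`. -/
def zetam (ζ : ℝ) : ℝ := min ζ (Real.pi - ζ)

/-- The ball `B_r` of holomorphic functions on the strip `S_{ζ_m/2}` with sup-norm `≤ r`. -/
def holBall (ζ r : ℝ) : Set (ℂ → ℂ) :=
  {f | DifferentiableOn ℂ f (strip (zetam ζ / 2)) ∧
    ∀ z ∈ strip (zetam ζ / 2), ‖f z‖ ≤ r}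

/-- Hyperbolic cotangent. -/
def cothC (z : ℂ) : ℂ := Complex.cosh z / Complex.sinh z

/-- The kernel `K(ξ) = sgn(π-2ζ)/(2iπ) [coth(ξ-iζ_m) - coth(ξ+iζ_m)]`. -/
def Kker (ζ : ℝ) (ξ : ℂ) : ℂ :=
  ((Real.sign (Real.pi - 2 * ζ) : ℝ) : ℂ) / (2 * (Real.pi : ℂ) * Complex.I) *
    (cothC (ξ - Complex.I * (zetam ζ : ℝ)) - cothC (ξ + Complex.I * (zetam ζ : ℝ)))

/-- The bare energy `e₀(ξ) = h - 2J sin²ζ/(sinh ξ sinh(ξ-iζ))`. -/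
def e0fun (J h ζ : ℝ) (ξ : ℂ) : ℂ :=
  (h : ℂ) - 2 * (J : ℂ) * ((Real.sin ζ : ℝ) : ℂ) ^ 2 /
    (Complex.sinh ξ * Complex.sinh (ξ - Complex.I * (ζ : ℝ)))

/-- `ℵ = (J/T) sinh η = -i (J/T) sin ζ`. -/
def alephC (J T ζ : ℝ) : ℂ := -Complex.I * (J : ℂ) * ((Real.sin ζ : ℝ) : ℂ) / (T : ℂ)

/-- Integral of `f` along the circle `∂D_{0,ε}` from `κ` to `v` in the positive direction. -/
def arcIntegral (ε : ℝ) (κ v : ℂ) (f : ℂ → ℂ) : ℂ :=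
  ∫ θ in (Complex.arg κ)..(toIocMod Real.two_pi_pos (Complex.arg κ) (Complex.arg v)),
    f (circleMap 0 ε θ) * (circleMap 0 ε θ * Complex.I)

/-- The determination `Ln[1+e^A]` of the logarithm of `1 + e^A` along `∂D_{0,ε}`,
`Ln[1+e^A](v) = ∫_κ^v A'(u)/(1+e^{-A(u)}) du + log(1+e^{A(κ)})`,
the integral running from the base point `κ` to `v` in positive direction along `∂D_{0,ε}`. -/
def cLog (ε : ℝ) (κ : ℂ) (A : ℂ → ℂ) (v : ℂ) : ℂ :=
  arcIntegral ε κ v (fun u => deriv A u / (1 + Complex.exp (-(A u)))) +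
    Complex.log (1 + Complex.exp (A κ))

/-- Reduction of `z` modulo `iπℤ` to the fundamental strip `|Im| ≤ π/2`. -/
def reduceIpi (z : ℂ) : ℂ := z - ((round (z.im / Real.pi) : ℤ) : ℂ) * ((Real.pi : ℂ) * Complex.I)

/-- The function `θ`: the `iπ`-periodic determination of
`-i log(sinh(iζ+λ)/sinh(iζ-λ))` used in the paper. -/
def theta (ζ : ℝ) (lam : ℂ) : ℂ :=
  if |(reduceIpi lam).im| < zetam ζ then
    Complex.I * Complex.log
      (Complex.sinh (Complex.I * (ζ : ℝ) + reduceIpi lam) /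
        Complex.sinh (Complex.I * (ζ : ℝ) - reduceIpi lam))
  else
    -(Real.pi : ℂ) * ((Real.sign (Real.pi - 2 * ζ) : ℝ) : ℂ) +
      Complex.I * Complex.log
        (Complex.sinh (Complex.I * (ζ : ℝ) + reduceIpi lam) /
          Complex.sinh (reduceIpi lam - Complex.I * (ζ : ℝ)))

/-- The `+`-boundary value `θ₊` of `θ` on its cuts. -/
def thetaPlus (ζ : ℝ) (lam : ℂ) : ℂ :=
  if -(zetam ζ) ≤ (reduceIpi lam).im ∧ (reduceIpi lam).im < zetam ζ then
    Complex.I * Complex.log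
      (Complex.sinh (Complex.I * (ζ : ℝ) + reduceIpi lam) /
        Complex.sinh (Complex.I * (ζ : ℝ) - reduceIpi lam))
  else
    -(Real.pi : ℂ) * ((Real.sign (Real.pi - 2 * ζ) : ℝ) : ℂ) +
      Complex.I * Complex.log
        (Complex.sinh (Complex.I * (ζ : ℝ) + reduceIpi lam) /
          Complex.sinh (reduceIpi lam - Complex.I * (ζ : ℝ)))

/-- Congruence modulo `iπℤ`. -/
def modIpi (z w : ℂ) : Prop := ∃ k : ℤ, z - w = (k : ℂ) * ((Real.pi : ℂ) * Complex.I)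
/-- `η = -iζ`. -/
def etaC (ζ : ℝ) : ℂ := -Complex.I * (ζ : ℝ)

/-- `ε_i = (-1)^{i-1}`: `+1` on the first basis vector, `-1` on the second. -/
def signOf (i : Fin 2) : ℂ := if i = 0 then 1 else -1

/-- Index of a site of the quantum space: `(ℓ, 0)` is the odd site `2ℓ+1`,
`(ℓ, 1)` the even site `2ℓ+2`, for `ℓ = 0, …, N-1`. -/
abbrev QIdx (N : ℕ) := Fin N × Fin 2

/-- Basis labels of the quantum space `h_q = ⊗_{a=1}^{2N} ℂ²`. -/
abbrev QS (N : ℕ) := QIdx N → Fin 2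

/-- Basis labels of `h_0 ⊗ h_q`. -/
abbrev FI (N : ℕ) := Fin 2 × QS N

/-- The six-vertex R-matrix on `ℂ² ⊗ ℂ²`. -/
def Rmat (η lam : ℂ) : Matrix (Fin 2 × Fin 2) (Fin 2 × Fin 2) ℂ :=
  fun p q =>
    (Complex.sinh η)⁻¹ *
      (if p = q then (if p.1 = p.2 then Complex.sinh (η + lam) else Complex.sinh lam)
       else if p.1 = q.2 ∧ p.2 = q.1 then Complex.sinh η else 0)

/-- The permutation operator on `ℂ² ⊗ ℂ²`. -/
def Pmat : Matrix (Fin 2 × Fin 2) (Fin 2 × Fin 2) ℂ :=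
  fun p q => if p.1 = q.2 ∧ p.2 = q.1 then 1 else 0

/-- Partial transposition in the first tensor factor of `ℂ² ⊗ ℂ²`. -/
def pt1 (M : Matrix (Fin 2 × Fin 2) (Fin 2 × Fin 2) ℂ) :
    Matrix (Fin 2 × Fin 2) (Fin 2 × Fin 2) ℂ :=
  fun p q => M (q.1, p.2) (p.1, q.2)

/-- Embedding of a two-site operator acting on `h_0 ⊗ h_b` (auxiliary space first). -/
def emb0 (N : ℕ) (M : Matrix (Fin 2 × Fin 2) (Fin 2 × Fin 2) ℂ) (b : QIdx N) :
    Matrix (FI N) (FI N) ℂ :=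
  fun p q => (if ∀ c, c ≠ b → p.2 c = q.2 c then 1 else 0) * M (p.1, p.2 b) (q.1, q.2 b)

/-- Embedding of a two-site operator acting on `h_a ⊗ h_0` (auxiliary space second). -/
def embA (N : ℕ) (M : Matrix (Fin 2 × Fin 2) (Fin 2 × Fin 2) ℂ) (a : QIdx N) :
    Matrix (FI N) (FI N) ℂ :=
  fun p q => (if ∀ c, c ≠ a → p.2 c = q.2 c then 1 else 0) * M (p.2 a, p.1) (q.2 a, q.1)

/-- The twist `e^{(h/2T) σ^z_0}` acting on the auxiliary space. -/
def EzFull (N : ℕ) (h T : ℝ) : Matrix (FI N) (FI N) ℂ :=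
  fun p q => if p = q then Complex.exp (((h / (2 * T) : ℝ) : ℂ) * signOf p.1) else 0

/-- The factor `R^{t_{2ℓ}}_{2ℓ,0}(-ℵ/N - ξ) ⬝ R_{0,2ℓ-1}(ξ - ℵ/N)` of the quantum
monodromy matrix; here `ℓ : Fin N` labels the paper's pair of sites `(2ℓ+1, 2ℓ+2)`. -/
def monFactor (J T ζ : ℝ) (N : ℕ) (ξ : ℂ) (ℓ : Fin N) : Matrix (FI N) (FI N) ℂ :=
  embA N (pt1 (Rmat (etaC ζ) (-(alephC J T ζ) / (N : ℂ) - ξ))) (ℓ, 1) *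
    emb0 N (Rmat (etaC ζ) (ξ - alephC J T ζ / (N : ℂ))) (ℓ, 0)

/-- The quantum monodromy matrix `T_{q;0}(ξ)` on `h_0 ⊗ h_q`. -/
def Tmon (J h T ζ : ℝ) (N : ℕ) [NeZero N] (ξ : ℂ) : Matrix (FI N) (FI N) ℂ :=
  (((List.range N).reverse).map (fun i => monFactor J T ζ N ξ (Fin.ofNat N (i : ℕ)))).prod *
    EzFull N h T

/-- Partial trace over the auxiliary space `h_0`. -/
def tr0 {N : ℕ} (M : Matrix (FI N) (FI N) ℂ) : Matrix (QS N) (QS N) ℂ :=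
  fun i j => ∑ a : Fin 2, M (a, i) (a, j)

/-- The quantum transfer matrix `t_q = tr_0 T_{q;0}(0)` at Trotter number `N`. -/
def tq (J h T ζ : ℝ) (N : ℕ) [NeZero N] : Matrix (QS N) (QS N) ℂ :=
  tr0 (Tmon J h T ζ N 0)

/-- `Π_ℓ = P^{t_{2ℓ}}_{2ℓ,0} P_{0,2ℓ-1}` (with `ℓ : Fin N` labelling the paper's `ℓ+1`). -/
def PiOp (N : ℕ) (ℓ : Fin N) : Matrix (FI N) (FI N) ℂ :=
  embA N (pt1 Pmat) (ℓ, 1) * emb0 N Pmat (ℓ, 0)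

/-- `W_ℓ = R^{t_{2ℓ}}_{2ℓ,0}(-ℵ/N) R_{0,2ℓ-1}(-ℵ/N) - Π_ℓ`. -/
def WOp (J T ζ : ℝ) (N : ℕ) (ℓ : Fin N) : Matrix (FI N) (FI N) ℂ :=
  monFactor J T ζ N 0 ℓ - PiOp N ℓ

/-- `Ω_{ℓ;m} = Π_ℓ ⋯ Π_{m+1} e^{(h/2T) σ^z_0 δ_{m,0}}` for paper indices `ℓ ≥ m`. -/
def OmegaOp (h T : ℝ) (N : ℕ) [NeZero N] (ℓ m : ℕ) : Matrix (FI N) (FI N) ℂ :=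
  (((List.range (ℓ - m)).reverse).map (fun i => PiOp N (Fin.ofNat N (m + i : ℕ)))).prod *
    (if m = 0 then EzFull N h T else 1)

/-- `ω_{N;0} = tr_0 Ω_{N;0}`. -/
def omegaN (h T : ℝ) (N : ℕ) [NeZero N] : Matrix (QS N) (QS N) ℂ :=
  tr0 (OmegaOp h T N N 0)

/-- `δt_q`, defined through the decomposition `t_q = ω_{N;0} + δt_q`. -/
def deltaTq (J h T ζ : ℝ) (N : ℕ) [NeZero N] : Matrix (QS N) (QS N) ℂ :=
  tq J h T ζ N - omegaN h T N

/-- `Λ` is a non-degenerate (simple) eigenvalue of `M` which is strictly maximal in modulus. -/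
def IsDomEig {n : Type*} [Fintype n] [DecidableEq n] (M : Matrix n n ℂ) (Λ : ℂ) : Prop :=
  Λ ∈ (Matrix.charpoly M).roots ∧ (Matrix.charpoly M).roots.count Λ = 1 ∧
    ∀ μ ∈ (Matrix.charpoly M).roots, μ ≠ Λ → ‖μ‖ < ‖Λ‖

/-- The vector `v` of Lemma 2.1: `v = Σ_{i ∈ {1,2}^N} e^{(h/2T) ε_{i_N}} ∏_s e_{i_{s-1}}^{(2s-1)} e_{i_s}^{(2s)}`
(periodic convention `i_0 ≡ i_N`). -/
def vVec (h T : ℝ) (N : ℕ) [NeZero N] : QS N → ℂ :=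
  fun g =>
    if ∀ s : Fin N, g (s, 0) = g (s - 1, 1) then
      Complex.exp (((h / (2 * T) : ℝ) : ℂ) * signOf (g ((0 : Fin N) - 1, 1)))
    else 0

/-- The vector `w` of Lemma 2.1: `w = Σ_{j ∈ {1,2}^N} ∏_s e_{j_s}^{(2s-1)} e_{j_s}^{(2s)}`. -/
def wVec (N : ℕ) : QS N → ℂ :=
  fun g => if ∀ s : Fin N, g (s, 0) = g (s, 1) then 1 else 0

open Fin.NatCast

section Aux

variable {N : ℕ} [NeZero N]

lemma boole_mul_boole (P Q : Prop) [Decidable P] [Decidable Q] :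
    (if P then (1:ℂ) else 0) * (if Q then 1 else 0) = if P ∧ Q then 1 else 0 := by
  split_ifs <;> simp_all

lemma piOp_apply (ℓ : Fin N) (a b : Fin 2) (g g' : QS N) :
    PiOp N ℓ (a, g) (b, g') =
      if (g (ℓ,1) = a ∧ g (ℓ,0) = b ∧ g' (ℓ,0) = g' (ℓ,1) ∧
          ∀ c : QIdx N, c ≠ (ℓ,0) → c ≠ (ℓ,1) → g' c = g c) then 1 else 0 := by
  classical
  have hterm : ∀ x1 : Fin 2, ∀ x2 : QS N,
      embA N (pt1 Pmat) (ℓ, 1) (a, g) (x1, x2) * emb0 N Pmat (ℓ, 0) (x1, x2) (b, g') =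
      if ((∀ c, c ≠ ((ℓ,1) : QIdx N) → g c = x2 c) ∧ (x2 (ℓ,1) = x1 ∧ a = g (ℓ,1)) ∧
          (∀ c, c ≠ ((ℓ,0) : QIdx N) → x2 c = g' c) ∧ (x1 = g' (ℓ,0) ∧ x2 (ℓ,0) = b)) then 1 else 0 := by
    intro x1 x2
    simp only [embA, emb0, pt1, Pmat]
    rw [mul_mul_mul_comm, boole_mul_boole, boole_mul_boole, boole_mul_boole]
    congr 1
    simp only [eq_iff_iff]
    tauto
  rw [PiOp, Matrix.mul_apply]
  rw [Finset.sum_eq_single ((g' (ℓ,0), Function.update g (ℓ,1) (g' (ℓ,0))) : FI N)]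
  · rw [hterm]
    refine if_congr ?_ rfl rfl
    constructor
    · rintro ⟨h1, ⟨h2, h3⟩, h4, h5, h6⟩
      refine ⟨h3.symm, ?_, ?_, ?_⟩
      · rw [← h6, Function.update_of_ne (by simp) _ g]
      · rw [← h4 (ℓ,1) (by simp), Function.update_self]
      · intro c hc0 hc1
        rw [← h4 c hc0, Function.update_of_ne hc1 _ g]
    · rintro ⟨h1, h2, h3, h4⟩
      refine ⟨?_, ⟨Function.update_self _ _ _, h1.symm⟩, ?_, rfl,
        by rw [Function.update_of_ne (by simp) _ g]; exact h2⟩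
      · intro c hc
        rw [Function.update_of_ne hc _ g]
      · intro c hc
        by_cases hc1 : c = (ℓ,1)
        · subst hc1; rw [Function.update_self]; exact h3
        · rw [Function.update_of_ne hc1 _ g]; exact (h4 c hc hc1).symm
  · rintro ⟨x1, x2⟩ - hne
    rw [hterm]
    rw [if_neg]
    rintro ⟨h1, ⟨h2, h3⟩, h4, h5, h6⟩
    apply hne
    have hx2 : x2 = Function.update g (ℓ,1) (g' (ℓ,0)) := by
      funext c
      by_cases hc1 : c = (ℓ,1)
      · subst hc1; rw [Function.update_self, h2, h5]
      · rw [Function.update_of_ne hc1 _ g, ← h1 c hc1]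
    exact Prod.ext h5 hx2
  · intro hmem; exact absurd (Finset.mem_univ _) hmem

lemma ite_eq_ite_of_iff {P Q : Prop} [Decidable P] [Decidable Q] (h : P ↔ Q) (x y : ℂ) :
    (if P then x else y) = (if Q then x else y) := by
  split_ifs <;> first | rfl | tauto

lemma cast_ne_cast {N : ℕ} [NeZero N] {i j : ℕ} (hi : i < N) (hj : j < N) (hij : i ≠ j) :
    (i : Fin N) ≠ (j : Fin N) := fun h =>
  hij (by rw [← Fin.val_cast_of_lt hi, ← Fin.val_cast_of_lt hj, h])

lemma slot_ne {N : ℕ} {s s' : Fin N} {t t' : Fin 2} (hs : s ≠ s') :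
    ((s, t) : QIdx N) ≠ (s', t') := fun h => hs (congrArg Prod.fst h)

lemma fin_two (t : Fin 2) : t = 0 ∨ t = 1 := by fin_cases t <;> simp

/-- The chain condition describing the entries of the partial products `Π_{m-1} ⋯ Π_0`. -/
def Pcond (N : ℕ) [NeZero N] (m : ℕ) (a : Fin 2) (g : QS N) (c : Fin 2) (k : QS N) : Prop :=
  a = g (((m - 1 : ℕ) : Fin N), 1) ∧ c = g (((0 : ℕ) : Fin N), 0) ∧
  (∀ ℓ : ℕ, ℓ + 1 < m → g (((ℓ + 1 : ℕ) : Fin N), 0) = g ((ℓ : Fin N), 1)) ∧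
  (∀ ℓ : ℕ, ℓ < m → k ((ℓ : Fin N), 0) = k ((ℓ : Fin N), 1)) ∧
  (∀ s : Fin N, m ≤ (s : ℕ) → ∀ t, k (s, t) = g (s, t))

/-- The partial products `Π_{m-1} ⋯ Π_0`. -/
def Pprod (N : ℕ) [NeZero N] (m : ℕ) : Matrix (FI N) (FI N) ℂ :=
  (((List.range m).reverse).map (fun i => PiOp N ((i : ℕ) : Fin N))).prod

lemma Pprod_zero (N : ℕ) [NeZero N] : Pprod N 0 = 1 := rfl

lemma Pprod_succ (N : ℕ) [NeZero N] (m : ℕ) :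
    Pprod N (m + 1) = PiOp N ((m : ℕ) : Fin N) * Pprod N m := by
  simp [Pprod, List.range_succ]

lemma Pprod_apply (N : ℕ) [NeZero N] :
    ∀ m : ℕ, 1 ≤ m → m ≤ N → ∀ (a c : Fin 2) (g k : QS N),
    Pprod N m (a, g) (c, k) = if Pcond N m a g c k then 1 else 0 := by
  intro m
  induction m with
  | zero => omega
  | succ m ih =>
    intro hm1 hmN a c g k
    have hN : 0 < N := Nat.pos_of_ne_zero (NeZero.ne N)
    rcases Nat.eq_zero_or_pos m with hm0 | hm0
    · subst hm0
      have e0 : ((0 + 1 - 1 : ℕ) : Fin N) = ((0 : ℕ) : Fin N) := by norm_num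
      rw [Pprod_succ, Pprod_zero, mul_one, piOp_apply]
      refine ite_eq_ite_of_iff ?_ _ _
      constructor
      · rintro ⟨h1, h2, h3, h4⟩
        refine ⟨by rw [e0]; exact h1.symm, h2.symm, fun ℓ hℓ => absurd hℓ (by omega), ?_, ?_⟩
        · intro ℓ hℓ
          interval_cases ℓ
          exact h3
        · intro s hs t
          have hs0 : s ≠ ((0 : ℕ) : Fin N) := by
            intro h; rw [h] at hs; simp at hs
          exact h4 (s, t) (slot_ne hs0) (slot_ne hs0)
      · rintro ⟨h1, h2, h3, h4, h5⟩
        rw [e0] at h1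
        refine ⟨h1.symm, h2.symm, h4 0 (by omega), ?_⟩
        rintro ⟨s, t⟩ hc0 hc1
        apply h5
        have hs0 : s ≠ ((0 : ℕ) : Fin N) := by
          intro h; subst h
          rcases fin_two t with ht | ht <;> subst ht
          · exact hc0 rfl
          · exact hc1 rfl
        have : (s : ℕ) ≠ 0 := fun h => hs0 (Fin.ext (by simpa using h))
        omega
    · -- inductive step, m ≥ 1
      have hmN' : m ≤ N := by omega
      have hmltN : m < N := by omega
      have hvm : ((m : Fin N) : ℕ) = m := Fin.val_cast_of_lt hmltN
      rw [Pprod_succ, Matrix.mul_apply]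
      set j : Fin 2 := k (((m : ℕ) : Fin N), 0) with hj
      set g0 : QS N :=
        Function.update (Function.update g (((m : ℕ) : Fin N), 0) j) (((m : ℕ) : Fin N), 1) j
        with hg0
      have hg0m0 : g0 (((m : ℕ) : Fin N), 0) = j := by
        rw [hg0, Function.update_of_ne (by simp) _ _, Function.update_self]
      have hg0m1 : g0 (((m : ℕ) : Fin N), 1) = j := by
        rw [hg0, Function.update_self]
      have hg0off : ∀ c : QIdx N, c ≠ (((m : ℕ) : Fin N), 0) → c ≠ (((m : ℕ) : Fin N), 1) →
          g0 c = g c := by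
        intro c hc0 hc1
        rw [hg0, Function.update_of_ne hc1, Function.update_of_ne hc0]
      have hmm1 : ((m - 1 : ℕ) : Fin N) ≠ ((m : ℕ) : Fin N) :=
        cast_ne_cast (by omega) hmltN (by omega)
      rw [Finset.sum_eq_single ((g (((m : ℕ) : Fin N), 0), g0) : FI N)]
      · rw [piOp_apply, ih hm0 hmN', boole_mul_boole]
        refine ite_eq_ite_of_iff ?_ _ _
        constructor
        · rintro ⟨⟨p1, p2, p3, p4⟩, q1, q2, q3, q4, q5⟩
          have hq5m0 : k (((m : ℕ) : Fin N), 0) = g0 (((m : ℕ) : Fin N), 0) :=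
            q5 _ (by omega) 0
          have hq5m1 : k (((m : ℕ) : Fin N), 1) = g0 (((m : ℕ) : Fin N), 1) :=
            q5 _ (by omega) 1
          refine ⟨?_, ?_, ?_, ?_, ?_⟩
          · rw [← p1]; norm_num
          · rw [q2, hg0off _ (slot_ne (cast_ne_cast hN hmltN (by omega)))
              (slot_ne (cast_ne_cast hN hmltN (by omega)))]
          · intro ℓ hℓ
            rcases Nat.lt_or_ge (ℓ + 1) m with hc | hc
            · have := q3 ℓ hc
              rw [hg0off _ (slot_ne (cast_ne_cast (by omega) hmltN (by omega)))
                    (slot_ne (cast_ne_cast (by omega) hmltN (by omega))),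
                  hg0off _ (slot_ne (cast_ne_cast (by omega) hmltN (by omega)))
                    (slot_ne (cast_ne_cast (by omega) hmltN (by omega)))] at this
              exact this
            · have hlm : ℓ + 1 = m := by omega
              have hq1 : g (((m : ℕ) : Fin N), 0) = g (((m - 1 : ℕ) : Fin N), 1) :=
                q1.trans (hg0off _ (slot_ne hmm1) (slot_ne hmm1))
              have hml : m - 1 = ℓ := by omega
              rw [hlm, hq1, hml]
          · intro ℓ hℓ
            rcases Nat.lt_or_ge ℓ m with hc | hc
            · exact q4 ℓ hc
            · have hℓm : ℓ = m := by omega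
              subst hℓm
              rw [hq5m0, hq5m1, hg0m0, hg0m1]
          · intro s hs t
            have := q5 s (by omega) t
            rw [hg0off _ (slot_ne (fun h => by rw [h, hvm] at hs; omega))
                  (slot_ne (fun h => by rw [h, hvm] at hs; omega))] at this
            exact this
        · rintro ⟨h1, h2, h3, h4, h5⟩
          refine ⟨⟨?_, rfl, by rw [hg0m0, hg0m1], hg0off⟩, ?_, ?_, ?_, ?_, ?_⟩
          · rw [h1]; norm_num
          · -- g(m,0) = g0(m-1,1)
            rw [hg0off _ (slot_ne hmm1) (slot_ne hmm1)]
            have := h3 (m - 1) (by omega)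
            rw [Nat.sub_add_cancel hm0] at this
            exact this
          · rw [h2, hg0off _ (slot_ne (cast_ne_cast hN hmltN (by omega)))
              (slot_ne (cast_ne_cast hN hmltN (by omega)))]
          · intro ℓ hℓ
            rw [hg0off _ (slot_ne (cast_ne_cast (by omega) hmltN (by omega)))
                  (slot_ne (cast_ne_cast (by omega) hmltN (by omega))),
                hg0off _ (slot_ne (cast_ne_cast (by omega) hmltN (by omega)))
                  (slot_ne (cast_ne_cast (by omega) hmltN (by omega)))]
            exact h3 ℓ (by omega)
          · exact fun ℓ hℓ => h4 ℓ (by omega)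
          · intro s hs t
            rcases Nat.eq_or_lt_of_le hs with hsm | hsm
            · have hse : s = ((m : ℕ) : Fin N) := Fin.ext (by rw [hvm, ← hsm])
              subst hse
              rcases fin_two t with ht | ht <;> subst ht
              · rw [hg0m0]
              · rw [hg0m1, hj]; exact (h4 m (by omega)).symm
            · rw [hg0off _ (slot_ne (fun h => by rw [h, hvm] at hsm; omega))
                  (slot_ne (fun h => by rw [h, hvm] at hsm; omega))]
              exact h5 s (by omega) t
      · rintro ⟨b, g'⟩ - hne
        rw [piOp_apply, ih hm0 hmN', boole_mul_boole, if_neg]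
        rintro ⟨⟨p1, p2, p3, p4⟩, q1, q2, q3, q4, q5⟩
        apply hne
        have hg' : g' = g0 := by
          funext c
          obtain ⟨s, t⟩ := c
          by_cases hs : s = ((m : ℕ) : Fin N)
          · subst hs
            have hq0 : g' (((m : ℕ) : Fin N), 0) = j := by
              rw [hj, q5 _ (by omega) 0]
            rcases fin_two t with ht | ht <;> subst ht
            · rw [hq0, hg0m0]
            · rw [← p3, hq0, hg0m1]
          · rw [p4 _ (slot_ne hs) (slot_ne hs), hg0off _ (slot_ne hs) (slot_ne hs)]
        exact Prod.ext p2.symm hg'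
      · intro hmem; exact absurd (Finset.mem_univ _) hmem

lemma natCast_pred_eq {N : ℕ} [NeZero N] : ((N - 1 : ℕ) : Fin N) = (0 : Fin N) - 1 := by
  have h : ((N - 1 : ℕ) : Fin N) + 1 = 0 := by
    have e : ((N - 1 : ℕ) : Fin N) + 1 = ((N - 1 + 1 : ℕ) : Fin N) := by push_cast; ring
    rw [e, Nat.sub_add_cancel (Nat.one_le_iff_ne_zero.mpr (NeZero.ne N)), Fin.natCast_self]
  rw [zero_sub, eq_neg_of_add_eq_zero_left h]

lemma vCond_iff {N : ℕ} [NeZero N] (g : QS N) :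
    (∀ s : Fin N, g (s, 0) = g (s - 1, 1)) ↔
      (g (((0 : ℕ) : Fin N), 0) = g (((N - 1 : ℕ) : Fin N), 1) ∧
       ∀ ℓ : ℕ, ℓ + 1 < N → g (((ℓ + 1 : ℕ) : Fin N), 0) = g ((ℓ : Fin N), 1)) := by
  constructor
  · intro hs
    constructor
    · have := hs 0
      rw [natCast_pred_eq]
      simpa using this
    · intro ℓ hℓ
      have := hs ((ℓ + 1 : ℕ) : Fin N)
      rwa [show ((ℓ + 1 : ℕ) : Fin N) - 1 = (ℓ : Fin N) from by push_cast; exact add_sub_cancel_right _ _] at this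
  · rintro ⟨h0, hchain⟩ s
    rcases Nat.eq_zero_or_pos s.val with hv | hv
    · have hs0 : s = 0 := Fin.ext hv
      subst hs0
      rw [natCast_pred_eq] at h0
      simpa using h0
    · have hs : s = ((s.val - 1 + 1 : ℕ) : Fin N) := by
        rw [show s.val - 1 + 1 = s.val from by omega, Fin.cast_val_eq_self]
      rw [hs, show ((s.val - 1 + 1 : ℕ) : Fin N) - 1 = ((s.val - 1 : ℕ) : Fin N) from by
        push_cast; exact add_sub_cancel_right _ _]
      exact hchain (s.val - 1) (by omega)

lemma wCond_iff {N : ℕ} [NeZero N] (k : QS N) :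
    (∀ ℓ : ℕ, ℓ < N → k ((ℓ : Fin N), 0) = k ((ℓ : Fin N), 1)) ↔
      ∀ s : Fin N, k (s, 0) = k (s, 1) := by
  constructor
  · intro hl s
    have := hl s.val s.isLt
    rwa [Fin.cast_val_eq_self] at this
  · intro hs ℓ _
    exact hs _

lemma OmegaOp_eq (hr T : ℝ) (N : ℕ) [NeZero N] :
    OmegaOp hr T N N 0 = Pprod N N * EzFull N hr T := by
  simp [OmegaOp, Pprod]

lemma omegaN_apply (hr T : ℝ) (N : ℕ) [NeZero N] (g k : QS N) :
    omegaN hr T N g k = vVec hr T N g * wVec N k := by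
  have hN : 0 < N := Nat.pos_of_ne_zero (NeZero.ne N)
  have step1 : ∀ a : Fin 2, OmegaOp hr T N N 0 (a, g) (a, k) =
      (if Pcond N N a g a k then 1 else 0) *
        Complex.exp (((hr / (2 * T) : ℝ) : ℂ) * signOf a) := by
    intro a
    rw [OmegaOp_eq, Matrix.mul_apply]
    rw [Finset.sum_eq_single ((a, k) : FI N)]
    · rw [Pprod_apply N N hN le_rfl, EzFull, if_pos rfl]
    · intro q _ hq
      have : EzFull N hr T q (a, k) = 0 := by rw [EzFull, if_neg hq]
      rw [this, mul_zero]
    · intro hmem; exact absurd (Finset.mem_univ _) hmem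
  have homega : omegaN hr T N g k =
      ∑ a : Fin 2, OmegaOp hr T N N 0 (a, g) (a, k) := rfl
  rw [homega]
  simp only [step1]
  set a0 : Fin 2 := g (((N - 1 : ℕ) : Fin N), 1) with ha0
  rw [Finset.sum_eq_single a0]
  · have hPcond : Pcond N N a0 g a0 k ↔
        ((∀ s : Fin N, g (s, 0) = g (s - 1, 1)) ∧ ∀ s : Fin N, k (s, 0) = k (s, 1)) := by
      constructor
      · rintro ⟨h1, h2, h3, h4, h5⟩
        exact ⟨(vCond_iff g).mpr ⟨h2.symm, h3⟩, (wCond_iff k).mp h4⟩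
      · rintro ⟨hv, hw⟩
        exact ⟨rfl, ((vCond_iff g).mp hv).1.symm, ((vCond_iff g).mp hv).2,
          fun ℓ _ => (wCond_iff k).mpr hw ℓ (by omega),
          fun s hs t => absurd hs (by omega)⟩
    rw [vVec, wVec]
    by_cases hv : ∀ s : Fin N, g (s, 0) = g (s - 1, 1) <;>
      by_cases hw : ∀ s : Fin N, k (s, 0) = k (s, 1)
    · rw [if_pos (hPcond.mpr ⟨hv, hw⟩), if_pos hv, if_pos hw, one_mul, mul_one]
      rw [ha0, natCast_pred_eq]
    · rw [if_neg (fun hc => hw (hPcond.mp hc).2), if_pos hv, if_neg hw, zero_mul, mul_zero]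
    · rw [if_neg (fun hc => hv (hPcond.mp hc).1), if_neg hv]; simp
    · rw [if_neg (fun hc => hv (hPcond.mp hc).1), if_neg hv]; simp
  · intro b _ hb
    rw [if_neg (fun hc => hb hc.1), zero_mul]
  · intro hmem; exact absurd (Finset.mem_univ _) hmem

lemma omegaN_eq (hr T : ℝ) (N : ℕ) [NeZero N] :
    omegaN hr T N = Matrix.vecMulVec (vVec hr T N) (wVec N) := by
  ext g k
  rw [Matrix.vecMulVec_apply]
  exact omegaN_apply hr T N g k

lemma rank_vecMulVec_one {n : Type*} [Fintype n] [DecidableEq n] (v w : n → ℂ)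
    (hv : v ≠ 0) (hw : w ≠ 0) : (Matrix.vecMulVec v w).rank = 1 := by
  classical
  have hrange : LinearMap.range (Matrix.vecMulVec v w).mulVecLin = Submodule.span ℂ {v} := by
    apply le_antisymm
    · rintro y ⟨x, rfl⟩
      have hy : (Matrix.vecMulVec v w).mulVecLin x = (dotProduct w x) • v := by
        funext i
        rw [Matrix.mulVecLin_apply]
        show ∑ b, Matrix.vecMulVec v w i b * x b = _
        simp only [Matrix.vecMulVec_apply, Pi.smul_apply, dotProduct, smul_eq_mul,
          Finset.sum_mul]
        exact Finset.sum_congr rfl fun b _ => by ring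
      rw [hy]
      exact Submodule.smul_mem _ _ (Submodule.mem_span_singleton_self v)
    · rw [Submodule.span_le, Set.singleton_subset_iff]
      obtain ⟨j, hj⟩ : ∃ j, w j ≠ 0 := by
        by_contra hc; push_neg at hc; exact hw (funext hc)
      refine ⟨Pi.single j ((w j)⁻¹), ?_⟩
      funext i
      rw [Matrix.mulVecLin_apply, Matrix.mulVec_single]
      simp only [Pi.smul_apply, Matrix.col_apply, MulOpposite.smul_eq_mul_unop, MulOpposite.unop_op,
        Matrix.vecMulVec_apply]
      field_simp
  rw [Matrix.rank, hrange]
  exact finrank_span_singleton hv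

lemma const_of_cycle {N : ℕ} [NeZero N] (f : Fin N → Fin 2)
    (hf : ∀ s, f s = f (s - 1)) : ∀ s, f s = f 0 := by
  have key : ∀ n : ℕ, n < N → f ((n : ℕ) : Fin N) = f 0 := by
    intro n
    induction n with
    | zero => intro _; norm_num
    | succ n ih =>
      intro hn
      have e : ((n + 1 : ℕ) : Fin N) - 1 = ((n : ℕ) : Fin N) := by push_cast; exact add_sub_cancel_right _ _
      rw [hf (((n + 1 : ℕ)) : Fin N), e, ih (by omega)]
  intro s
  have := key s.val s.isLt
  rwa [Fin.cast_val_eq_self] at this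

lemma sum_wv (hr T : ℝ) (N : ℕ) [NeZero N] :
    (∑ g : QS N, (starRingEnd ℂ) (wVec N g) * vVec hr T N g) =
      ((2 * Real.cosh (hr / (2 * T)) : ℝ) : ℂ) := by
  classical
  set g0 : QS N := fun _ => 0 with hg0
  set g1 : QS N := fun _ => 1 with hg1
  have hne : g0 ≠ g1 := by
    intro hc
    have := congrFun hc ((0 : Fin N), 0)
    rw [hg0, hg1] at this
    simp at this
  have hzero : ∀ g ∈ (Finset.univ : Finset (QS N)), g ∉ ({g0, g1} : Finset (QS N)) →
      (starRingEnd ℂ) (wVec N g) * vVec hr T N g = 0 := by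
    intro g _ hg
    by_cases hw : ∀ s : Fin N, g (s, 0) = g (s, 1)
    · by_cases hv : ∀ s : Fin N, g (s, 0) = g (s - 1, 1)
      · exfalso
        apply hg
        have hf : ∀ s : Fin N, g (s, 1) = g (s - 1, 1) := fun s => (hw s).symm.trans (hv s)
        have hconst := const_of_cycle (fun s => g (s, 1)) hf
        have hgc : ∀ p : QIdx N, g p = g (0, 1) := by
          rintro ⟨s, t⟩
          rcases fin_two t with ht | ht <;> subst ht
          · rw [hv s]; exact hconst (s - 1)
          · exact hconst s
        rcases fin_two (g (0, 1)) with hc | hc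
        · have : g = g0 := funext fun p => (hgc p).trans hc
          simp [this]
        · have : g = g1 := funext fun p => (hgc p).trans hc
          simp [this]
      · rw [vVec, if_neg hv, mul_zero]
    · rw [wVec, if_neg hw, map_zero, zero_mul]
  rw [← Finset.sum_subset (Finset.subset_univ ({g0, g1} : Finset (QS N)))
      (fun g hu hg => hzero g hu hg), Finset.sum_pair hne]
  have hwv0 : wVec N g0 = 1 := by rw [wVec, if_pos (fun s => rfl)]
  have hwv1 : wVec N g1 = 1 := by rw [wVec, if_pos (fun s => rfl)]
  have hvv0 : vVec hr T N g0 = Complex.exp ((hr / (2 * T) : ℝ) : ℂ) := by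
    rw [vVec, if_pos (fun s => rfl)]
    norm_num [signOf]
  have hvv1 : vVec hr T N g1 = Complex.exp (-((hr / (2 * T) : ℝ) : ℂ)) := by
    rw [vVec, if_pos (fun s => rfl)]
    norm_num [signOf]
  rw [hwv0, hwv1, hvv0, hvv1, map_one, one_mul, one_mul]
  rw [Real.cosh_eq]
  push_cast
  ring

lemma sum_w (N : ℕ) [NeZero N] :
    (∑ g : QS N, Complex.normSq (wVec N g)) = 2 ^ N := by
  classical
  have hfilter : ∀ g ∈ (Finset.univ : Finset (QS N)),
      Complex.normSq (wVec N g) ≠ 0 → (∀ s : Fin N, g (s, 0) = g (s, 1)) := by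
    intro g _ hg
    by_contra hc
    rw [wVec, if_neg hc] at hg
    simp at hg
  rw [← Finset.sum_filter_of_ne hfilter]
  rw [Finset.sum_nbij' (g := fun _ : Fin N → Fin 2 => (1 : ℝ))
      (fun (g : QS N) => (fun s => g (s, 1) : Fin N → Fin 2))
      (fun (f : Fin N → Fin 2) => (fun p => f p.1 : QS N))
      (fun g _ => Finset.mem_univ _)
      (fun f _ => by simp [Finset.mem_filter])
      (fun g hg => by
        simp only [Finset.mem_filter, Finset.mem_univ, true_and] at hg
        funext p
        obtain ⟨s, t⟩ := p
        rcases fin_two t with ht | ht <;> subst ht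
        · exact (hg s).symm
        · rfl)
      (fun f _ => rfl)
      (fun g hg => by
        simp only [Finset.mem_filter, Finset.mem_univ, true_and] at hg
        rw [wVec, if_pos hg]
        simp)]
  rw [Finset.sum_const]
  simp
lemma sum_v (hr T : ℝ) (N : ℕ) [NeZero N] (hT : T ≠ 0) :
    (∑ g : QS N, Complex.normSq (vVec hr T N g)) = 2 ^ N * Real.cosh (hr / T) := by
  classical
  set q : Fin N := (0 : Fin N) - 1 with hq
  set H : Fin 2 → ℝ :=
    fun j => Complex.normSq (Complex.exp (((hr / (2 * T) : ℝ) : ℂ) * signOf j)) with hH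
  have hfilter : ∀ g ∈ (Finset.univ : Finset (QS N)),
      Complex.normSq (vVec hr T N g) ≠ 0 → (∀ s : Fin N, g (s, 0) = g (s - 1, 1)) := by
    intro g _ hg
    by_contra hc
    rw [vVec, if_neg hc] at hg
    simp at hg
  rw [← Finset.sum_filter_of_ne hfilter]
  rw [Finset.sum_nbij' (g := fun f : Fin N → Fin 2 => H (f q))
      (fun (g : QS N) => (fun s => g (s, 1) : Fin N → Fin 2))
      (fun (f : Fin N → Fin 2) => (fun p => if p.2 = 1 then f p.1 else f (p.1 - 1) : QS N))
      (fun g _ => Finset.mem_univ _)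
      (fun f _ => by
        simp only [Finset.mem_filter, Finset.mem_univ, true_and]
        intro s
        norm_num)
      (fun g hg => by
        simp only [Finset.mem_filter, Finset.mem_univ, true_and] at hg
        funext p
        obtain ⟨s, t⟩ := p
        rcases fin_two t with ht | ht <;> subst ht
        · simpa using (hg s).symm
        · simp)
      (fun f _ => by funext s; simp)
      (fun g hg => by
        simp only [Finset.mem_filter, Finset.mem_univ, true_and] at hg
        rw [vVec, if_pos hg, hH, hq])]
  have hsplit : (∑ f : Fin N → Fin 2, H (f q)) =
      ∑ p : Fin 2 × ({j : Fin N // j ≠ q} → Fin 2), H p.1 :=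
    Fintype.sum_equiv (Equiv.funSplitAt q (Fin 2)) _ _ (fun f => rfl)
  rw [hsplit, Fintype.sum_prod_type]
  have hcard : Fintype.card ({j : Fin N // j ≠ q} → Fin 2) = 2 ^ (N - 1) := by
    rw [Fintype.card_fun]
    congr 1
    have := Fintype.card_subtype_compl (fun j : Fin N => j = q)
    rw [Fintype.card_subtype_eq, Fintype.card_fin] at this
    exact this
  have hinner : ∀ x : Fin 2, (∑ _y : {j : Fin N // j ≠ q} → Fin 2, H x) = 2 ^ (N - 1) * H x := by
    intro x
    rw [Finset.sum_const, Finset.card_univ, hcard, nsmul_eq_mul]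
    push_cast
    ring
  simp only [hinner]
  rw [Fin.sum_univ_two]
  have hH0 : H 0 = Real.exp (hr / (2 * T)) * Real.exp (hr / (2 * T)) := by
    rw [hH]
    norm_num [signOf]
    rw [show ((hr : ℂ) / (2 * (T : ℂ))) = ((hr / (2 * T) : ℝ) : ℂ) from by push_cast; ring,
      ← Complex.ofReal_exp, Complex.normSq_ofReal]
  have hH1 : H 1 = Real.exp (-(hr / (2 * T))) * Real.exp (-(hr / (2 * T))) := by
    rw [hH]
    norm_num [signOf]
    rw [show -((hr : ℂ) / (2 * T)) = ((-(hr / (2 * T)) : ℝ) : ℂ) from by push_cast; ring,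
      ← Complex.ofReal_exp, Complex.normSq_ofReal]
  rw [hH0, hH1, ← Real.exp_add, ← Real.exp_add, Real.cosh_eq]
  have e1 : hr / (2 * T) + hr / (2 * T) = hr / T := by field_simp; ring
  have e2 : -(hr / (2 * T)) + -(hr / (2 * T)) = -(hr / T) := by field_simp; ring
  rw [e1, e2]
  have e3 : (2 : ℝ) ^ N = 2 ^ (N - 1) * 2 := by
    rw [← pow_succ]
    congr 1
    have := Nat.pos_of_ne_zero (NeZero.ne N)
    omega
  rw [e3]
  ring

end Aux

/-- **Lemma 2.1.** The operator `ω_{N;0} = tr_0 Ω_{N;0}` has rank `1` and equals the outer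
product `v ⬝ wᵗ` of the explicit vectors `v` and `w`; moreover
`(w, v) = 2 cosh(h/2T)`, `‖v‖² = 2^N cosh(h/T)` and `‖w‖² = 2^N`. -/
theorem omegaN_rank_one (J h T ζ : ℝ)
    (hJ : 0 < J) (hh : 0 < h) (hT : 0 < T) (hζ : ζ ∈ Set.Ioo 0 Real.pi)
    (N : ℕ) [NeZero N] :
    omegaN h T N = Matrix.vecMulVec (vVec h T N) (wVec N) ∧
    Matrix.rank (omegaN h T N) = 1 ∧
    (∑ g : QS N, (starRingEnd ℂ) (wVec N g) * vVec h T N g) =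
      ((2 * Real.cosh (h / (2 * T)) : ℝ) : ℂ) ∧
    (∑ g : QS N, Complex.normSq (vVec h T N g)) = 2 ^ N * Real.cosh (h / T) ∧
    (∑ g : QS N, Complex.normSq (wVec N g)) = 2 ^ N := by
  have hv : vVec h T N ≠ 0 := by
    intro h0
    have hc := congrFun h0 (fun _ => (0 : Fin 2))
    rw [vVec, if_pos (fun s => rfl)] at hc
    have hc2 : Complex.exp (((h / (2 * T) : ℝ) : ℂ) * signOf 0) = 0 := by simpa using hc
    exact Complex.exp_ne_zero _ hc2
  have hw : wVec N ≠ 0 := by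
    intro h0
    have hc := congrFun h0 (fun _ => (0 : Fin 2))
    rw [wVec, if_pos (fun s => rfl)] at hc
    simp at hc
  refine ⟨omegaN_eq h T N, ?_, sum_wv h T N, sum_v h T N (ne_of_gt hT), sum_w N⟩
  rw [omegaN_eq h T N]
  exact rank_vecMulVec_one _ _ hv hw

end XXZ
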